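/- arXiv:2603.23834 — 3 statements merged into one kernel-verified Lean document; each statement's English description precedes it below -/
import Mathlib

section
/- Let N ≥ 2, let e ∈ 𝕊^{N−1}, let Ω ⊆ ℝ^N be a nonempty open connected set that is strongly unbounded in the direction e, and let u,v : [0,∞) × Ω̄ → [0,1] be continuous. Then sup_{z ∈ ℝ^N} w*(e,z) = w*(e), the equality being understood in the extended nonnegative reals [0,+∞]. -/
open Set Metric Filter Topology ENNReal

noncomputable section

/-- Euclidean space `ℝ^N`. -/
abbrev Euc (N : ℕ) := EuclideanSpace ℝ (Fin N)

variable {N : ℕ}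

/-- `Ω` is strongly unbounded in the direction `e`. -/
def StronglyUnbounded (Ω : Set (Euc N)) (e : Euc N) : Prop :=
  ∃ R : ℝ, 0 ≤ R ∧ ∃ s₀ : ℝ, ∀ s : ℝ, s₀ ≤ s →
    (closedBall (s • e) R ∩ closure Ω).Nonempty

/-- `R(e)`: the infimum of the admissible radii in the direction `e`. -/
def dirRadius (Ω : Set (Euc N)) (e : Euc N) : ℝ :=
  sInf {R : ℝ | 0 ≤ R ∧ ∃ s₀ : ℝ, ∀ s : ℝ, s₀ ≤ s →
    (closedBall (s • e) R ∩ closure Ω).Nonempty}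

/-- `R(e,z)`, as an extended nonnegative real. -/
def dirRadiusAt (Ω : Set (Euc N)) (e z : Euc N) : ℝ≥0∞ :=
  sInf {r : ℝ≥0∞ | ∃ R : ℝ, 0 ≤ R ∧ r = ENNReal.ofReal R ∧ ∃ s₀ : ℝ, ∀ s : ℝ, s₀ ≤ s →
    (closedBall (z + s • e) R ∩ closure Ω).Nonempty}

/-- The set of speeds `c > 0` entering the definition of the upper spreading speed `w*(e)`. -/
def upperSpeedSet (Ω : Set (Euc N)) (e : Euc N) (u v : ℝ → Euc N → ℝ) : Set ℝ :=
  {c : ℝ | 0 < c ∧ ∀ A : ℝ, dirRadius Ω e < A → ∀ ε > (0:ℝ), ∃ T : ℝ, ∀ t : ℝ, T ≤ t →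
    ∀ s : ℝ, c * t ≤ s → ∀ x ∈ closedBall (s • e) A ∩ closure Ω,
      |u t x| + |1 - v t x| ≤ ε}

/-- The upper spreading speed `w*(e)` in the direction `e`, in `[0,+∞]`. -/
def wUpper (Ω : Set (Euc N)) (e : Euc N) (u v : ℝ → Euc N → ℝ) : ℝ≥0∞ :=
  sInf (ENNReal.ofReal '' upperSpeedSet Ω e u v)

/-- The set of speeds `c > 0` entering the definition of `w*(e,z)`. -/
def upperSpeedSetAt (Ω : Set (Euc N)) (e z : Euc N) (u v : ℝ → Euc N → ℝ) : Set ℝ :=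
  {c : ℝ | 0 < c ∧ ∃ A : ℝ, 0 < A ∧
    (∃ s₀ : ℝ, ∀ s : ℝ, s₀ ≤ s → (closedBall (z + s • e) A ∩ closure Ω).Nonempty) ∧
    ∀ ε > (0:ℝ), ∃ T : ℝ, ∀ t : ℝ, T ≤ t → ∀ s : ℝ, c * t ≤ s →
      ∀ x ∈ closedBall (z + s • e) A ∩ closure Ω, |u t x| + |1 - v t x| ≤ ε}

/-- The upper spreading speed `w*(e,z)` along the half-line `z + ℝ₊ e`, in `[0,+∞]`. -/
def wUpperAt (Ω : Set (Euc N)) (e z : Euc N) (u v : ℝ → Euc N → ℝ) : ℝ≥0∞ :=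
  sInf (ENNReal.ofReal '' upperSpeedSetAt Ω e z u v)

/-- The set of speeds `c > 0` entering the definition of the lower spreading speed `w_*(e)`. -/
def lowerSpeedSet (Ω : Set (Euc N)) (e : Euc N) (u v : ℝ → Euc N → ℝ) : Set ℝ :=
  {c : ℝ | 0 < c ∧ ∀ A : ℝ, dirRadius Ω e < A → ∀ ε > (0:ℝ), ∃ T : ℝ, ∀ τ t : ℝ,
    T ≤ τ → T ≤ t → τ ≤ c * t → ∀ s : ℝ, τ ≤ s → s ≤ c * t →
    ∀ x ∈ closedBall (s • e) A ∩ closure Ω, |1 - u t x| + |v t x| ≤ ε}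

/-- The lower spreading speed `w_*(e)` in the direction `e`, in `[0,+∞]` (`0` if no admissible speed). -/
def wLower (Ω : Set (Euc N)) (e : Euc N) (u v : ℝ → Euc N → ℝ) : ℝ≥0∞ :=
  sSup (ENNReal.ofReal '' lowerSpeedSet Ω e u v)

/-- The set of speeds `c > 0` entering the definition of `w_*(e,z)`. -/
def lowerSpeedSetAt (Ω : Set (Euc N)) (e z : Euc N) (u v : ℝ → Euc N → ℝ) : Set ℝ :=
  {c : ℝ | 0 < c ∧ ∃ A : ℝ, 0 < A ∧
    (∃ s₀ : ℝ, ∀ s : ℝ, s₀ ≤ s → (closedBall (z + s • e) A ∩ closure Ω).Nonempty) ∧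
    ∀ ε > (0:ℝ), ∃ T : ℝ, ∀ τ t : ℝ, T ≤ τ → T ≤ t → τ ≤ c * t →
      ∀ s : ℝ, τ ≤ s → s ≤ c * t →
      ∀ x ∈ closedBall (z + s • e) A ∩ closure Ω, |1 - u t x| + |v t x| ≤ ε}

/-- The lower spreading speed `w_*(e,z)` along the half-line `z + ℝ₊ e`, in `[0,+∞]`. -/
def wLowerAt (Ω : Set (Euc N)) (e z : Euc N) (u v : ℝ → Euc N → ℝ) : ℝ≥0∞ :=
  sSup (ENNReal.ofReal '' lowerSpeedSetAt Ω e z u v)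

/-- The Laplacian of a function on `ℝ^N`, as the sum of the second derivatives in the
coordinate directions. -/
def lap (f : Euc N → ℝ) (x : Euc N) : ℝ :=
  ∑ i : Fin N, fderiv ℝ (fun y => fderiv ℝ f y (EuclideanSpace.single i 1)) x
    (EuclideanSpace.single i 1)

/-- Monostability assumptions on the parameters of the Lotka-Volterra system. -/
def LVParams (d₁ d₂ r₁ r₂ a₁ a₂ : ℝ) : Prop :=
  0 < d₁ ∧ 0 < d₂ ∧ 0 < r₁ ∧ 0 < r₂ ∧ 0 < a₁ ∧ a₁ < 1 ∧ 1 < a₂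

/-- A classical solution of the Lotka-Volterra competition-diffusion system on the whole
space `ℝ^N`: bounded and continuous on `[0,∞) × ℝ^N`, `C¹` in `t` and `C²` in `x` on
`(0,∞) × ℝ^N`, satisfying the system pointwise. -/
structure IsLVSolution (d₁ d₂ r₁ r₂ a₁ a₂ : ℝ) (u v : ℝ → Euc N → ℝ) : Prop where
  contu : ContinuousOn (fun p : ℝ × Euc N => u p.1 p.2) (Ici 0 ×ˢ univ)
  contv : ContinuousOn (fun p : ℝ × Euc N => v p.1 p.2) (Ici 0 ×ˢ univ)
  bounded : ∃ M : ℝ, ∀ t : ℝ, 0 ≤ t → ∀ x : Euc N, |u t x| ≤ M ∧ |v t x| ≤ M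
  smooth_t : ∀ x : Euc N, ContDiffOn ℝ 1 (fun t => u t x) (Ioi 0) ∧
    ContDiffOn ℝ 1 (fun t => v t x) (Ioi 0)
  smooth_x : ∀ t : ℝ, 0 < t → ContDiff ℝ 2 (u t) ∧ ContDiff ℝ 2 (v t)
  eqn_u : ∀ t : ℝ, 0 < t → ∀ x : Euc N, deriv (fun τ => u τ x) t =
    d₁ * lap (u t) x + r₁ * u t x * (1 - u t x - a₁ * v t x)
  eqn_v : ∀ t : ℝ, 0 < t → ∀ x : Euc N, deriv (fun τ => v τ x) t =
    d₂ * lap (v t) x + r₂ * v t x * (1 - v t x - a₂ * u t x)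

/-- An admissible initial datum: continuous with values in `[0,1]`, `u₀ ≢ 0`, and
`(u₀,v₀) = (0,1)` outside a compact set. -/
def AdmissibleInit (u₀ v₀ : Euc N → ℝ) : Prop :=
  Continuous u₀ ∧ Continuous v₀ ∧ (∀ x, u₀ x ∈ Icc (0:ℝ) 1 ∧ v₀ x ∈ Icc (0:ℝ) 1) ∧
  (∃ x, u₀ x ≠ 0) ∧ ∃ K : Set (Euc N), IsCompact K ∧ ∀ x ∉ K, u₀ x = 0 ∧ v₀ x = 1

/-- A classical solution of the Lotka-Volterra competition-diffusion system on a domain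
`Ω ⊆ ℝ^N` (no boundary condition): continuous on `[0,∞) × Ω̄`, `C¹` in `t` and `C²` in `x`
on `(0,∞) × Ω`, satisfying the system pointwise on `(0,∞) × Ω`. -/
structure IsLVSolutionOn (d₁ d₂ r₁ r₂ a₁ a₂ : ℝ) (Ω : Set (Euc N))
    (u v : ℝ → Euc N → ℝ) : Prop where
  contu : ContinuousOn (fun p : ℝ × Euc N => u p.1 p.2) (Ici 0 ×ˢ closure Ω)
  contv : ContinuousOn (fun p : ℝ × Euc N => v p.1 p.2) (Ici 0 ×ˢ closure Ω)
  smooth_t : ∀ x ∈ Ω, ContDiffOn ℝ 1 (fun t => u t x) (Ioi 0) ∧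
    ContDiffOn ℝ 1 (fun t => v t x) (Ioi 0)
  smooth_x : ∀ t : ℝ, 0 < t → ContDiffOn ℝ 2 (u t) Ω ∧ ContDiffOn ℝ 2 (v t) Ω
  eqn_u : ∀ t : ℝ, 0 < t → ∀ x ∈ Ω, deriv (fun τ => u τ x) t =
    d₁ * lap (u t) x + r₁ * u t x * (1 - u t x - a₁ * v t x)
  eqn_v : ∀ t : ℝ, 0 < t → ∀ x ∈ Ω, deriv (fun τ => v τ x) t =
    d₂ * lap (v t) x + r₂ * v t x * (1 - v t x - a₂ * u t x)

/-- `Ω` has the interior ball property with radius `ε₀`. -/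
def InteriorBallProperty (Ω : Set (Euc N)) (ε₀ : ℝ) : Prop :=
  ∀ x ∈ frontier Ω, ∃ y : Euc N, ball y ε₀ ⊆ Ω ∧ dist x y = ε₀

/-- The geodesic distance in `Ω̄`: the infimum of the lengths (total variations) of
continuous paths joining `x` to `y` within `Ω̄`, `+∞` if there is no rectifiable path. -/
def geoDist (Ω : Set (Euc N)) (x y : Euc N) : ℝ≥0∞ :=
  sInf {L : ℝ≥0∞ | ∃ γ : ℝ → Euc N, ContinuousOn γ (Icc 0 1) ∧ γ 0 = x ∧ γ 1 = y ∧
    MapsTo γ (Icc 0 1) (closure Ω) ∧ L = eVariationOn γ (Icc 0 1)}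

/-- Hypothesis `H_{y,z}`: the points `y` and `z` are asymptotically connected in the
direction `e` within `Ω`. -/
def HypAsympConnected (Ω : Set (Euc N)) (e y z : Euc N) : Prop :=
  ∃ Ry Rz : ℝ, dirRadiusAt Ω e y < ENNReal.ofReal Ry ∧ dirRadiusAt Ω e z < ENNReal.ofReal Rz ∧
    ∃ C : ℝ≥0∞, C ≠ ⊤ ∧ ∃ s₀ : ℝ, ∀ s : ℝ, s₀ ≤ s →
      ∀ y' ∈ closedBall (y + s • e) Ry ∩ closure Ω,
      ∀ z' ∈ closedBall (z + s • e) Rz ∩ closure Ω, geoDist Ω y' z' ≤ C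

/-- `sup_{z ∈ ℝ^N} w*(e,z) = w*(e)` in `[0,+∞]`. -/
theorem sup_wUpperAt_eq_wUpper {N : ℕ} (hN : 2 ≤ N) (e : Euc N) (he : ‖e‖ = 1)
    (Ω : Set (Euc N)) (hΩo : IsOpen Ω) (hΩc : IsConnected Ω)
    (hsu : StronglyUnbounded Ω e) (u v : ℝ → Euc N → ℝ)
    (hcu : ContinuousOn (fun p : ℝ × Euc N => u p.1 p.2) (Ici 0 ×ˢ closure Ω))
    (hcv : ContinuousOn (fun p : ℝ × Euc N => v p.1 p.2) (Ici 0 ×ˢ closure Ω))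
    (hrange : ∀ t : ℝ, 0 ≤ t → ∀ x ∈ closure Ω,
      u t x ∈ Icc (0:ℝ) 1 ∧ v t x ∈ Icc (0:ℝ) 1) :
    (⨆ z : Euc N, wUpperAt Ω e z u v) = wUpper Ω e u v := by
  refine le_antisymm (iSup_le fun z => ?_) ?_
  · -- `upperSpeedSet ⊆ upperSpeedSetAt z`, hence `wUpperAt z ≤ wUpper`.
    refine sInf_le_sInf (image_mono ?_)
    rintro c ⟨hc, hprop⟩
    obtain ⟨R₀, hR₀, s₀, hs₀⟩ := hsu
    refine ⟨hc, R₀ + ‖z‖ + 1, by positivity, ⟨s₀, fun s hs => ?_⟩, fun ε hε => ?_⟩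
    · obtain ⟨y, hy1, hy2⟩ := hs₀ s hs
      refine ⟨y, ?_, hy2⟩
      have h1 : dist y (z + s • e) ≤ dist y (s • e) + dist (s • e) (z + s • e) :=
        dist_triangle _ _ _
      have h2 : dist (s • e) (z + s • e) = ‖z‖ := by
        rw [add_comm z, dist_self_add_right]
      have h3 : dist y (s • e) ≤ R₀ := hy1
      simp only [mem_closedBall]
      linarith
    · have hA : dirRadius Ω e < R₀ + ‖z‖ + 1 + ‖z‖ := by
        have hle : dirRadius Ω e ≤ R₀ := by
          refine csInf_le ⟨0, fun R hR => hR.1⟩ ⟨hR₀, s₀, hs₀⟩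
        have : (0:ℝ) ≤ ‖z‖ := norm_nonneg _
        linarith
      obtain ⟨T, hT⟩ := hprop _ hA ε hε
      refine ⟨T, fun t ht s hst x hx => ?_⟩
      refine hT t ht s hst x ⟨?_, hx.2⟩
      have h1 : dist x (s • e) ≤ dist x (z + s • e) + dist (z + s • e) (s • e) :=
        dist_triangle _ _ _
      have h2 : dist (z + s • e) (s • e) = ‖z‖ := by
        rw [add_comm z, dist_self_add_left]
      have h3 : dist x (z + s • e) ≤ R₀ + ‖z‖ + 1 := hx.1
      simp only [mem_closedBall]
      linarith
  · by_contra hcon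
    push_neg at hcon
    obtain ⟨r, hr0, h1, h2⟩ := ENNReal.lt_iff_exists_real_btwn.mp hcon
    have hrpos : 0 < r := ENNReal.ofReal_pos.mp ((zero_le).trans_lt h1)
    -- for each z, pick an admissible speed `c z < r`
    have hz : ∀ z : Euc N, ∃ c : ℝ, c ∈ upperSpeedSetAt Ω e z u v ∧ c < r := by
      intro z
      have : wUpperAt Ω e z u v < ENNReal.ofReal r :=
        lt_of_le_of_lt (le_iSup (fun z => wUpperAt Ω e z u v) z) h1
      obtain ⟨b, hb, hblt⟩ := sInf_lt_iff.mp this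
      obtain ⟨c, hcmem, rfl⟩ := hb
      exact ⟨c, hcmem, (ENNReal.ofReal_lt_ofReal_iff hrpos).mp hblt⟩
    choose c hcmem hclt using hz
    have hcpos : ∀ z, 0 < c z := fun z => (hcmem z).1
    choose A hApos hne hbd using fun z => (hcmem z).2
    -- show `r ∈ upperSpeedSet`
    have hrmem : r ∈ upperSpeedSet Ω e u v := by
      refine ⟨hrpos, fun B hB ε hε => ?_⟩
      have hB0 : (0:ℝ) ≤ B := by
        have : (0:ℝ) ≤ dirRadius Ω e := by
          obtain ⟨R₀, hR₀, s₀, hs₀⟩ := hsu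
          exact le_csInf ⟨R₀, hR₀, s₀, hs₀⟩ fun R hR => hR.1
        linarith
      -- compactness: cover `closedBall 0 B` by finitely many balls `ball z (A z)`
      have hcov : closedBall (0 : Euc N) B ⊆ ⋃ z : Euc N, ball z (A z) := by
        intro y _
        exact mem_iUnion.mpr ⟨y, mem_ball_self (hApos y)⟩
      obtain ⟨F, hF⟩ := (isCompact_closedBall (0 : Euc N) B).elim_finite_subcover
        (fun z => ball z (A z)) (fun z => isOpen_ball) hcov
      choose T hT using fun z => hbd z ε hε
      obtain ⟨T₀, hT₀⟩ := (F.image T).exists_le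
      refine ⟨max T₀ 0, fun t ht s hst x hx => ?_⟩
      have ht0 : (0:ℝ) ≤ t := le_trans (le_max_right _ _) ht
      have hxball : x - s • e ∈ closedBall (0 : Euc N) B := by
        simp only [mem_closedBall, dist_zero_right]
        have : ‖x - s • e‖ = dist x (s • e) := (dist_eq_norm _ _).symm
        rw [this]
        exact hx.1
      obtain ⟨z, hzF, hzball⟩ := mem_iUnion₂.mp (hF hxball)
      have hxz : x ∈ closedBall (z + s • e) (A z) := by
        simp only [mem_closedBall]
        have : dist x (z + s • e) = ‖x - s • e - z‖ := by
          rw [dist_eq_norm]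
          congr 1
          abel
        rw [this]
        have := mem_ball_iff_norm.mp hzball
        exact le_of_lt this
      refine hT z t ?_ s ?_ x ⟨hxz, hx.2⟩
      · have : T z ≤ T₀ := hT₀ _ (Finset.mem_image_of_mem T hzF)
        calc T z ≤ T₀ := this
          _ ≤ max T₀ 0 := le_max_left _ _
          _ ≤ t := ht
      · calc c z * t ≤ r * t := mul_le_mul_of_nonneg_right (le_of_lt (hclt z)) ht0
          _ ≤ s := hst
    have : wUpper Ω e u v ≤ ENNReal.ofReal r :=
      sInf_le (mem_image_of_mem _ hrmem)
    exact absurd this (not_le.mpr h2)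

end
end

section
/- Let N ≥ 2, let e ∈ 𝕊^{N−1}, let Ω ⊆ ℝ^N be a nonempty open connected set that is strongly unbounded in the direction e, and let u,v : [0,∞) × Ω̄ → [0,1] be continuous and such that u(t,·) → 1 and v(t,·) → 0 locally uniformly in Ω̄ as t → +∞. Then inf_{z ∈ ℝ^N} w_*(e,z) = w_*(e), the equality being understood in the extended nonnegative reals [0,+∞]. -/
open Set Metric Filter Topology ENNReal

noncomputable section

variable {N : ℕ}

lemma dirRadius_nonneg {N : ℕ} (Ω : Set (Euc N)) (e : Euc N)
    (hsu : StronglyUnbounded Ω e) : 0 ≤ dirRadius Ω e :=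
  le_csInf hsu fun _ hR => hR.1

/-- The global lower speed set is contained in each local one. -/
lemma lowerSpeedSet_subset {N : ℕ} (Ω : Set (Euc N)) (e z : Euc N)
    (hsu : StronglyUnbounded Ω e) (u v : ℝ → Euc N → ℝ) :
    lowerSpeedSet Ω e u v ⊆ lowerSpeedSetAt Ω e z u v := by
  rintro c ⟨hc, H⟩
  have hd0 : 0 ≤ dirRadius Ω e := dirRadius_nonneg Ω e hsu
  refine ⟨hc, dirRadius Ω e + 1 + ‖z‖, by positivity, ?_, ?_⟩
  · -- nonemptiness of the balls
    obtain ⟨R, hRS, hRlt⟩ := exists_lt_of_csInf_lt hsu (lt_add_one (dirRadius Ω e))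
    obtain ⟨s₀, hs₀⟩ := hRS.2
    refine ⟨s₀, fun s hs => ?_⟩
    obtain ⟨y, hy1, hy2⟩ := hs₀ s hs
    refine ⟨y, ?_, hy2⟩
    have h1 : dist y (z + s • e) ≤ dist y (s • e) + dist (s • e) (z + s • e) :=
      dist_triangle _ _ _
    have h2 : dist (s • e) (z + s • e) = ‖z‖ := by
      rw [dist_eq_norm]; simp [norm_sub_rev]
    have h3 : dist y (s • e) ≤ R := mem_closedBall.mp hy1
    rw [mem_closedBall]
    calc dist y (z + s • e) ≤ R + ‖z‖ := by rw [h2] at h1; linarith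
      _ ≤ dirRadius Ω e + 1 + ‖z‖ := by linarith
  · -- convergence
    intro ε hε
    have hA' : dirRadius Ω e < dirRadius Ω e + 1 + ‖z‖ + ‖z‖ := by
      have := norm_nonneg z; linarith
    obtain ⟨T, hT⟩ := H _ hA' ε hε
    refine ⟨T, fun τ t hτ ht hτc s hs1 hs2 x hx => ?_⟩
    refine hT τ t hτ ht hτc s hs1 hs2 x ⟨?_, hx.2⟩
    have h1 : dist x (s • e) ≤ dist x (z + s • e) + dist (z + s • e) (s • e) :=
      dist_triangle _ _ _
    have h2 : dist (z + s • e) (s • e) = ‖z‖ := by rw [dist_eq_norm]; simp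
    have h3 : dist x (z + s • e) ≤ dirRadius Ω e + 1 + ‖z‖ := mem_closedBall.mp hx.1
    rw [mem_closedBall]
    rw [h2] at h1; linarith

/-- The local lower speed sets are downward closed in `(0,∞)`. -/
lemma lowerSpeedSetAt_mono {N : ℕ} {Ω : Set (Euc N)} {e z : Euc N}
    {u v : ℝ → Euc N → ℝ} {c c' : ℝ} (hc : 0 < c) (hcc' : c ≤ c')
    (h : c' ∈ lowerSpeedSetAt Ω e z u v) : c ∈ lowerSpeedSetAt Ω e z u v := by
  obtain ⟨hc', A, hA, hne, H⟩ := h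
  refine ⟨hc, A, hA, hne, fun ε hε => ?_⟩
  obtain ⟨T, hT⟩ := H ε hε
  refine ⟨max T 0, fun τ t hτ ht hτc s hs1 hs2 x hx => ?_⟩
  have ht0 : (0:ℝ) ≤ t := le_trans (le_max_right _ _) ht
  have hct : c * t ≤ c' * t := mul_le_mul_of_nonneg_right hcc' ht0
  exact hT τ t (le_trans (le_max_left _ _) hτ) (le_trans (le_max_left _ _) ht)
    (hτc.trans hct) s hs1 (hs2.trans hct) x hx

/-- If a speed is admissible along every half-line, it is admissible globally. -/
lemma mem_lowerSpeedSet_of_forall {N : ℕ} {Ω : Set (Euc N)} {e : Euc N}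
    {u v : ℝ → Euc N → ℝ} {c : ℝ} (hc : 0 < c)
    (hall : ∀ z : Euc N, c ∈ lowerSpeedSetAt Ω e z u v) :
    c ∈ lowerSpeedSet Ω e u v := by
  refine ⟨hc, fun A hA ε hε => ?_⟩
  choose Az hAz hne hcv using fun z => (hall z).2
  have hcover : closedBall (0 : Euc N) A ⊆ ⋃ z : Euc N, ball z (Az z) :=
    fun w _ => mem_iUnion.2 ⟨w, mem_ball_self (hAz w)⟩
  obtain ⟨F, hF⟩ := (isCompact_closedBall (0 : Euc N) A).elim_finite_subcover
    (fun z => ball z (Az z)) (fun z => isOpen_ball) hcover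
  choose Tf hTf using fun z => hcv z ε hε
  obtain ⟨T, hT⟩ := (F.image Tf).exists_le
  refine ⟨T, fun τ t hτ ht hτc s hs1 hs2 x hx => ?_⟩
  have hw : x - s • e ∈ closedBall (0 : Euc N) A := by
    rw [mem_closedBall_zero_iff]
    simpa [dist_eq_norm] using hx.1
  obtain ⟨z, hzF, hz⟩ := mem_iUnion₂.mp (hF hw)
  have hxz : x ∈ closedBall (z + s • e) (Az z) := by
    rw [mem_closedBall, dist_eq_norm]
    have h1 : x - (z + s • e) = (x - s • e) - z := by abel
    rw [h1, ← dist_eq_norm]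
    exact (mem_ball.mp hz).le
  have hTz : Tf z ≤ T := hT _ (Finset.mem_image_of_mem Tf hzF)
  exact hTf z τ t (hTz.trans hτ) (hTz.trans ht) hτc s hs1 hs2 x ⟨hxz, hx.2⟩

/-- `inf_{z ∈ ℝ^N} w_*(e,z) = w_*(e)` in `[0,+∞]`. -/
theorem inf_wLowerAt_eq_wLower {N : ℕ} (hN : 2 ≤ N) (e : Euc N) (he : ‖e‖ = 1)
    (Ω : Set (Euc N)) (hΩo : IsOpen Ω) (hΩc : IsConnected Ω)
    (hsu : StronglyUnbounded Ω e) (u v : ℝ → Euc N → ℝ)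
    (hcu : ContinuousOn (fun p : ℝ × Euc N => u p.1 p.2) (Ici 0 ×ˢ closure Ω))
    (hcv : ContinuousOn (fun p : ℝ × Euc N => v p.1 p.2) (Ici 0 ×ˢ closure Ω))
    (hrange : ∀ t : ℝ, 0 ≤ t → ∀ x ∈ closure Ω,
      u t x ∈ Icc (0:ℝ) 1 ∧ v t x ∈ Icc (0:ℝ) 1)
    (hloc1 : TendstoLocallyUniformlyOn (fun t x => u t x) (fun _ => (1:ℝ)) atTop (closure Ω))
    (hloc0 : TendstoLocallyUniformlyOn (fun t x => v t x) (fun _ => (0:ℝ)) atTop (closure Ω)) :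
    (⨅ z : Euc N, wLowerAt Ω e z u v) = wLower Ω e u v := by
  refine le_antisymm ?_ ?_
  · -- ⨅ ≤ wLower
    by_contra h
    rw [not_le] at h
    obtain ⟨r, h1, h2⟩ := ENNReal.lt_iff_exists_nnreal_btwn.mp h
    have hr0 : (0:ℝ≥0∞) < r := lt_of_le_of_lt zero_le h1
    have hrpos : 0 < (r : ℝ) := by exact_mod_cast hr0
    have hmem : ∀ z : Euc N, (r : ℝ) ∈ lowerSpeedSetAt Ω e z u v := by
      intro z
      have hlt : (r : ℝ≥0∞) < wLowerAt Ω e z u v :=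
        lt_of_lt_of_le h2 (iInf_le _ z)
      rw [wLowerAt] at hlt
      obtain ⟨b, hb, hrb⟩ := lt_sSup_iff.mp hlt
      obtain ⟨c', hc'S, rfl⟩ := hb
      have hrc' : (r : ℝ) ≤ c' := by
        by_contra hcon
        rw [not_le] at hcon
        exact absurd (ENNReal.ofReal_le_ofReal hcon.le)
          (not_le.mpr (by rw [ENNReal.ofReal_coe_nnreal]; exact hrb))
      exact lowerSpeedSetAt_mono hrpos hrc' hc'S
    have : ENNReal.ofReal (r : ℝ) ≤ wLower Ω e u v :=
      le_sSup (mem_image_of_mem _ (mem_lowerSpeedSet_of_forall hrpos hmem))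
    rw [ENNReal.ofReal_coe_nnreal] at this
    exact absurd this (not_le.mpr h1)
  · exact le_iInf fun z =>
      sSup_le_sSup (image_mono (lowerSpeedSet_subset Ω e z hsu u v))

end
end

section
/- Let N ≥ 2, assume d₁ = d₂ and a₁a₂ ≤ 1, and let (u,v) be a classical solution on ℝ^N of the Lotka–Volterra competition–diffusion system, taking values in [0,1]×[0,1], whose initial datum (u(0,·), v(0,·)) = (u₀,v₀) is admissible. Then for every c > 2√(d₁r₁(1−a₁)), sup{ u(t,x) + |1 − v(t,x)| : x ∈ ℝ^N, |x| ≥ ct } → 0 as t → +∞. -/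
open Set Metric Filter Topology ENNReal

noncomputable section

variable {N : ℕ}

lemma secondDeriv_nonpos_of_max {φ φ' : ℝ → ℝ} {b : ℝ}
    (hφ : ∀ s, HasDerivAt φ (φ' s) s) (h2 : HasDerivAt φ' b 0) (hmax : ∀ s, φ s ≤ φ 0) : b ≤ 0 := by
  by_contra hb
  push_neg at hb
  have hl : IsLocalMax φ 0 := Filter.Eventually.of_forall hmax
  have h0 : φ' 0 = 0 := by
    have := hl.deriv_eq_zero
    rwa [(hφ 0).deriv] at this
  have hslope : Tendsto (slope φ' 0) (𝓝[>] (0:ℝ)) (𝓝 b) :=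
    (hasDerivAt_iff_tendsto_slope.1 h2).mono_left
      (nhdsWithin_mono 0 (fun s hs => ne_of_gt hs))
  have hev : ∀ᶠ s in 𝓝[>] (0:ℝ), 0 < slope φ' 0 s :=
    hslope.eventually (eventually_gt_nhds hb)
  have hev2 : ∀ᶠ s in 𝓝[>] (0:ℝ), 0 < φ' s := by
    filter_upwards [hev, self_mem_nhdsWithin] with s hs hs0
    have : slope φ' 0 s = φ' s / s := by
      simp [slope_def_field, h0]
    rw [this] at hs
    have hs0' : (0:ℝ) < s := hs0
    by_contra hneg
    push_neg at hneg
    have : φ' s / s ≤ 0 := div_nonpos_of_nonpos_of_nonneg hneg hs0'.le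
    linarith
  obtain ⟨u, hu, hus⟩ := mem_nhdsGT_iff_exists_Ioo_subset.1 hev2
  have hu0 : (0:ℝ) < u := hu
  have hmono : StrictMonoOn φ (Icc 0 (u/2)) := by
    apply strictMonoOn_of_deriv_pos (convex_Icc _ _)
    · exact (fun s _ => (hφ s).differentiableAt.continuousAt.continuousWithinAt)
    · intro x hx
      rw [interior_Icc] at hx
      rw [(hφ x).deriv]
      exact hus ⟨hx.1, by linarith [hx.2]⟩
  have : φ 0 < φ (u/2) :=
    hmono (by constructor <;> linarith) (by constructor <;> linarith) (by linarith)
  exact absurd (hmax (u/2)) (not_le.2 this)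


lemma fderiv_apply_contDiff {f : Euc N → ℝ} (hf : ContDiff ℝ 2 f) (w : Euc N) :
    ContDiff ℝ 1 (fun y => fderiv ℝ f y w) := by
  have h1 : ContDiff ℝ 1 (fderiv ℝ f) := hf.fderiv_right (le_refl _)
  exact (ContinuousLinearMap.apply ℝ ℝ w).contDiff.comp h1

lemma lap_nonpos_of_max {f : Euc N → ℝ} (hf : ContDiff ℝ 2 f) {x₀ : Euc N}
    (hmax : ∀ x, f x ≤ f x₀) : lap f x₀ ≤ 0 := by
  apply Finset.sum_nonpos
  intro i _
  set w : Euc N := EuclideanSpace.single i (1:ℝ) with hw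
  set c : ℝ → Euc N := fun s => x₀ + s • w with hcdef
  have hc : ∀ s, HasDerivAt c w s := by
    intro s
    simpa [hcdef] using ((hasDerivAt_id s).smul_const w).const_add x₀
  set G : Euc N → ℝ := fun y => fderiv ℝ f y w with hG
  have hGc : ContDiff ℝ 1 G := fderiv_apply_contDiff hf w
  set φ : ℝ → ℝ := fun s => f (c s) with hφdef
  set φ' : ℝ → ℝ := fun s => G (c s) with hφ'def
  have hφ : ∀ s, HasDerivAt φ (φ' s) s := by
    intro s
    exact ((hf.differentiable (by norm_num)) (c s)).hasFDerivAt.comp_hasDerivAt s (hc s)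
  have hc0 : c 0 = x₀ := by simp [hcdef]
  have hd : HasFDerivAt G (fderiv ℝ G x₀) (c 0) := by
    rw [hc0]; exact ((hGc.differentiable one_ne_zero) x₀).hasFDerivAt
  have h2 : HasDerivAt φ' (fderiv ℝ G x₀ w) 0 := hd.comp_hasDerivAt 0 (hc 0)
  have hmax' : ∀ s, φ s ≤ φ 0 := by
    intro s; rw [hφdef]; simp only [hc0]; exact hmax _
  exact secondDeriv_nonpos_of_max hφ h2 hmax'

lemma lap_sub {f g : Euc N → ℝ} (hf : ContDiff ℝ 2 f) (hg : ContDiff ℝ 2 g) (x : Euc N) :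
    lap (fun y => f y - g y) x = lap f x - lap g x := by
  unfold lap
  rw [← Finset.sum_sub_distrib]
  apply Finset.sum_congr rfl
  intro i _
  set w : Euc N := EuclideanSpace.single i (1:ℝ)
  have h1 : (fun y => fderiv ℝ (fun z => f z - g z) y w)
      = fun y => fderiv ℝ f y w - fderiv ℝ g y w := by
    funext y
    rw [fderiv_fun_sub ((hf.differentiable (by norm_num)) y) ((hg.differentiable (by norm_num)) y)]
    rfl
  rw [h1, fderiv_fun_sub ((fderiv_apply_contDiff hf w).differentiable one_ne_zero x)
    ((fderiv_apply_contDiff hg w).differentiable one_ne_zero x)]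
  rfl

lemma lap_mul_const {f : Euc N → ℝ} (hf : ContDiff ℝ 2 f) (c : ℝ) (x : Euc N) :
    lap (fun y => f y * c) x = lap f x * c := by
  unfold lap
  rw [Finset.sum_mul]
  apply Finset.sum_congr rfl
  intro i _
  set w : Euc N := EuclideanSpace.single i (1:ℝ)
  have h1 : (fun y => fderiv ℝ (fun z => f z * c) y w)
      = fun y => fderiv ℝ f y w * c := by
    funext y
    rw [fderiv_mul_const ((hf.differentiable (by norm_num)) y)]
    simp [mul_comm]
  rw [h1, fderiv_mul_const ((fderiv_apply_contDiff hf w).differentiable one_ne_zero x)]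
  simp [mul_comm]

lemma lap_const_add (c : ℝ) {f : Euc N → ℝ} (hf : ContDiff ℝ 2 f) (x : Euc N) :
    lap (fun y => c + f y) x = lap f x := by
  unfold lap
  apply Finset.sum_congr rfl
  intro i _
  set w : Euc N := EuclideanSpace.single i (1:ℝ)
  have h1 : (fun y => fderiv ℝ (fun z => c + f z) y w)
      = fun y => fderiv ℝ f y w := by
    funext y
    rw [fderiv_const_add]
  rw [h1]

lemma lap_const_mul (c : ℝ) {f : Euc N → ℝ} (hf : ContDiff ℝ 2 f) (x : Euc N) :
    lap (fun y => c * f y) x = c * lap f x := by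
  unfold lap
  rw [Finset.mul_sum]
  apply Finset.sum_congr rfl
  intro i _
  set w : Euc N := EuclideanSpace.single i (1:ℝ)
  have h1 : (fun y => fderiv ℝ (fun z => c * f z) y w)
      = fun y => c * fderiv ℝ f y w := by
    funext y
    rw [fderiv_const_mul ((hf.differentiable (by norm_num)) y)]
    rfl
  rw [h1, fderiv_const_mul ((fderiv_apply_contDiff hf w).differentiable one_ne_zero x)]
  rfl

lemma lap_inner_self (x : Euc N) :
    lap (fun y : Euc N => (inner ℝ y y : ℝ)) x = 2 * N := by
  unfold lap
  have key : ∀ i : Fin N,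
      fderiv ℝ (fun y => fderiv ℝ (fun z : Euc N => (inner ℝ z z : ℝ)) y
        (EuclideanSpace.single i 1)) x (EuclideanSpace.single i 1) = 2 := by
    intro i
    set w : Euc N := EuclideanSpace.single i (1:ℝ) with hw
    have h1 : (fun y => fderiv ℝ (fun z : Euc N => (inner ℝ z z : ℝ)) y w)
        = fun y : Euc N => (inner ℝ y w : ℝ) + (inner ℝ w y : ℝ) := by
      funext y
      rw [fderiv_inner_apply ℝ differentiableAt_fun_id differentiableAt_fun_id w]
      simp
    rw [h1]
    have h2 : ∀ y : Euc N, (inner ℝ y w : ℝ) + (inner ℝ w y : ℝ) = 2 * (inner ℝ w y : ℝ) := by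
      intro y; rw [real_inner_comm y w]; ring
    simp only [h2]
    have h3 : DifferentiableAt ℝ (fun y : Euc N => (inner ℝ w y : ℝ)) x :=
      (innerSL ℝ w).differentiableAt
    rw [fderiv_const_mul h3]
    have h4 : fderiv ℝ (fun y : Euc N => (inner ℝ w y : ℝ)) x = innerSL ℝ w :=
      (innerSL ℝ w).fderiv
    rw [h4]
    have h6 : (inner ℝ w w : ℝ) = 1 := by
      rw [real_inner_self_eq_norm_sq, hw, EuclideanSpace.norm_single]
      norm_num
    rw [ContinuousLinearMap.smul_apply]
    rw [show ((innerSL ℝ) w) w = (inner ℝ w w : ℝ) from rfl, h6]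
    norm_num
  simp only [key]
  simp [Finset.card_univ]
  ring

section expw
variable {e : Euc N} (c1 α lam : ℝ)

lemma expw_contDiff (b : ℝ) : ContDiff ℝ 2 (fun x : Euc N => c1 * Real.exp (b - lam * (inner ℝ e x : ℝ))) := by
  exact contDiff_const.mul ((contDiff_const.sub (contDiff_const.mul ((innerSL ℝ e).contDiff))).exp)

lemma expw_hasFDerivAt (b : ℝ) (x : Euc N) :
    HasFDerivAt (fun x : Euc N => c1 * Real.exp (b - lam * (inner ℝ e x : ℝ)))
      ((c1 * Real.exp (b - lam * (inner ℝ e x : ℝ))) • (-(lam • (innerSL ℝ e)))) x := by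
  have h0 : HasFDerivAt (fun y : Euc N => (inner ℝ e y : ℝ)) (innerSL ℝ e) x :=
    (innerSL ℝ e).hasFDerivAt
  have h1 : HasFDerivAt (fun y : Euc N => b - lam * (inner ℝ e y : ℝ)) (-(lam • (innerSL ℝ e))) x :=
    (h0.const_mul lam).const_sub b
  have h2 := h1.exp
  have h3 := h2.const_mul c1
  rw [mul_smul]
  exact h3

lemma expw_fderiv_apply (b : ℝ) (x w : Euc N) :
    fderiv ℝ (fun x : Euc N => c1 * Real.exp (b - lam * (inner ℝ e x : ℝ))) x w
      = -(lam * (inner ℝ e w : ℝ)) * (c1 * Real.exp (b - lam * (inner ℝ e x : ℝ))) := by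
  rw [(expw_hasFDerivAt c1 lam b x).fderiv]
  simp [ContinuousLinearMap.smul_apply]
  ring

lemma expw_lap (he : ‖e‖ = 1) (b : ℝ) (x : Euc N) :
    lap (fun x : Euc N => c1 * Real.exp (b - lam * (inner ℝ e x : ℝ))) x
      = lam ^ 2 * (c1 * Real.exp (b - lam * (inner ℝ e x : ℝ))) := by
  unfold lap
  have key : ∀ i : Fin N,
      fderiv ℝ (fun y => fderiv ℝ (fun x : Euc N => c1 * Real.exp (b - lam * (inner ℝ e x : ℝ))) y
        (EuclideanSpace.single i 1)) x (EuclideanSpace.single i 1)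
      = lam ^ 2 * (inner ℝ e (EuclideanSpace.single i (1:ℝ)) : ℝ) ^ 2
          * (c1 * Real.exp (b - lam * (inner ℝ e x : ℝ))) := by
    intro i
    set w : Euc N := EuclideanSpace.single i (1:ℝ) with hw
    have h1 : (fun y => fderiv ℝ (fun x : Euc N => c1 * Real.exp (b - lam * (inner ℝ e x : ℝ))) y w)
        = fun y => -(lam * (inner ℝ e w : ℝ)) * (c1 * Real.exp (b - lam * (inner ℝ e y : ℝ))) := by
      funext y
      exact expw_fderiv_apply c1 lam b y w
    rw [h1]
    rw [fderiv_const_mul (((expw_contDiff c1 lam b).differentiable (by norm_num)) x)]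
    rw [ContinuousLinearMap.smul_apply]
    rw [expw_fderiv_apply c1 lam b x w]
    simp only [smul_eq_mul]
    ring
  simp only [key]
  rw [← Finset.sum_mul, ← Finset.mul_sum]
  have he2 : ∑ i : Fin N, (inner ℝ e (EuclideanSpace.single i (1:ℝ)) : ℝ) ^ 2 = 1 := by
    have : ∀ i : Fin N, (inner ℝ e (EuclideanSpace.single i (1:ℝ)) : ℝ) = e i := by
      intro i
      rw [EuclideanSpace.inner_single_right]
      simp
    simp only [this]
    have hn := EuclideanSpace.norm_eq e
    rw [he] at hn
    have : (∑ i : Fin N, ‖e i‖ ^ 2) = 1 := by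
      have h0 : (0:ℝ) ≤ ∑ i : Fin N, ‖e i‖ ^ 2 :=
        Finset.sum_nonneg (fun i _ => sq_nonneg _)
      nlinarith [Real.sq_sqrt h0, Real.sqrt_nonneg (∑ i : Fin N, ‖e i‖ ^ 2)]
    simpa [Real.norm_eq_abs, sq_abs] using this
  rw [he2]
  ring

end expw

lemma parabolic_comparison (d K M : ℝ) (hd : 0 < d) (hK : 0 ≤ K)
    (z : ℝ → Euc N → ℝ)
    (hcont : ContinuousOn (fun p : ℝ × Euc N => z p.1 p.2) (Ici 0 ×ˢ univ))
    (hbdd : ∀ t, 0 ≤ t → ∀ x, z t x ≤ M)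
    (hz0 : ∀ x, z 0 x ≤ 0)
    (hdt : ∀ t, 0 < t → ∀ x, DifferentiableAt ℝ (fun τ => z τ x) t)
    (hdx : ∀ t, 0 < t → ContDiff ℝ 2 (z t))
    (hineq : ∀ t, 0 < t → ∀ x, 0 < z t x →
      deriv (fun τ => z τ x) t ≤ d * lap (z t) x + K * z t x)
    {t : ℝ} (ht : 0 ≤ t) (x : Euc N) : z t x ≤ 0 := by
  -- enough to show for every δ > 0 the penalized bound
  have main : ∀ δ : ℝ, 0 < δ →
      z t x * Real.exp (-(K * t)) < δ * ((1 + (2 * d * N + 1) * t) + (inner ℝ x x : ℝ)) := by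
    intro δ hδ
    set T := t with hT
    -- the penalized function
    set h : ℝ → Euc N → ℝ := fun s y =>
      z s y * Real.exp (-(K * s)) - δ * ((1 + (2 * d * N + 1) * s) + (inner ℝ y y : ℝ)) with hh
    -- continuity of h on Ici 0 ×ˢ univ
    have hhcont : ContinuousOn (fun p : ℝ × Euc N => h p.1 p.2) (Ici 0 ×ˢ univ) := by
      apply ContinuousOn.sub
      · exact hcont.mul (Continuous.continuousOn (by fun_prop))
      · exact Continuous.continuousOn (continuous_const.mul ((continuous_const.add
          (continuous_const.mul continuous_fst)).add (continuous_snd.inner continuous_snd)))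
    by_contra hcon
    push_neg at hcon
    -- the bad set
    set S : Set (ℝ × Euc N) := {p | p.1 ∈ Icc 0 T ∧ 0 ≤ h p.1 p.2} with hS
    have hSne : S.Nonempty := ⟨(t, x), ⟨⟨ht, le_rfl⟩, by simpa [hh] using hcon⟩⟩
    -- S is contained in a compact set
    have hMM : ∀ s ∈ Icc (0:ℝ) T, ∀ y, 0 ≤ h s y → (inner ℝ y y : ℝ) ≤ max M 0 / δ := by
      intro s hs y hy
      have hE : Real.exp (-(K * s)) ≤ 1 := by
        have h0 : -(K * s) ≤ 0 := by nlinarith [mul_nonneg hK hs.1]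
        calc Real.exp (-(K * s)) ≤ Real.exp 0 := Real.exp_le_exp.2 h0
          _ = 1 := Real.exp_zero
      have hE0 : 0 < Real.exp (-(K * s)) := Real.exp_pos _
      have hzM : z s y * Real.exp (-(K * s)) ≤ max M 0 := by
        rcases le_or_gt (z s y) 0 with hz | hz
        · calc z s y * Real.exp (-(K * s)) ≤ 0 := mul_nonpos_of_nonpos_of_nonneg hz hE0.le
            _ ≤ max M 0 := le_max_right _ _
        · calc z s y * Real.exp (-(K * s)) ≤ z s y * 1 := by nlinarith
            _ = z s y := mul_one _
            _ ≤ M := hbdd s hs.1 y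
            _ ≤ max M 0 := le_max_left _ _
      have h1 : (0:ℝ) ≤ (2 * d * N + 1) * s := by
        apply mul_nonneg _ hs.1
        have : (0:ℝ) ≤ (N:ℝ) := Nat.cast_nonneg N
        nlinarith
      simp only [hh] at hy
      rw [le_div_iff₀ hδ]
      have hin : (0:ℝ) ≤ (inner ℝ y y : ℝ) := real_inner_self_nonneg
      nlinarith [hy, hzM, h1, hδ]
  -- compactness of S
    set R : ℝ := Real.sqrt (max M 0 / δ) with hR
    have hsub : S ⊆ Icc 0 T ×ˢ Metric.closedBall (0 : Euc N) R := by
      rintro ⟨s, y⟩ ⟨hs, hy⟩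
      refine ⟨hs, ?_⟩
      have h1 : (inner ℝ y y : ℝ) ≤ max M 0 / δ := hMM s hs y hy
      have h2 : ‖y‖ ^ 2 ≤ max M 0 / δ := by rwa [real_inner_self_eq_norm_sq] at h1
      have h3 : ‖y‖ ≤ R := by
        rw [hR]
        have h4 := Real.sqrt_le_sqrt h2
        rwa [Real.sqrt_sq (norm_nonneg y)] at h4
      simpa [Metric.mem_closedBall, dist_eq_norm] using h3
    have hSclosed : IsClosed S := by
      have e1 : S = (Icc 0 T ×ˢ (univ : Set (Euc N))) ∩
          (fun p : ℝ × Euc N => h p.1 p.2) ⁻¹' (Ici 0) := by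
        ext ⟨s, y⟩
        simp [hS, Set.mem_prod]
      rw [e1]
      apply ContinuousOn.preimage_isClosed_of_isClosed
      · exact hhcont.mono (fun p hp => ⟨hp.1.1, trivial⟩)
      · exact (isClosed_Icc).prod isClosed_univ
      · exact isClosed_Ici
    have hScompact : IsCompact S :=
      IsCompact.of_isClosed_subset ((isCompact_Icc).prod (isCompact_closedBall _ _)) hSclosed hsub
    obtain ⟨p₀, hp₀S, hp₀min⟩ := hScompact.exists_isMinOn hSne (continuous_fst.continuousOn)
    obtain ⟨t₀, x₀⟩ := p₀
    simp only [hS, mem_setOf_eq] at hp₀S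
    obtain ⟨ht₀I, hh₀⟩ := hp₀S
    -- t₀ > 0
    have ht₀pos : 0 < t₀ := by
      rcases lt_or_eq_of_le ht₀I.1 with hlt | heq
      · exact hlt
      · exfalso
        rw [← heq] at hh₀
        have : h 0 x₀ < 0 := by
          simp only [hh]
          have h1 : z 0 x₀ * Real.exp (-(K * 0)) ≤ 0 := by
            simp only [mul_zero, neg_zero, Real.exp_zero, mul_one]
            exact hz0 x₀
          have h2 : (0:ℝ) < δ * (1 + (2 * d * N + 1) * 0 + (inner ℝ x₀ x₀ : ℝ)) := by
            have : (0:ℝ) ≤ (inner ℝ x₀ x₀ : ℝ) := real_inner_self_nonneg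
            nlinarith
          linarith
        linarith
    -- before t₀ everything is negative
    have hbefore : ∀ s, 0 ≤ s → s < t₀ → ∀ y, h s y < 0 := by
      intro s hs0 hst y
      by_contra hcon2
      push_neg at hcon2
      have : (s, y) ∈ S := ⟨⟨hs0, le_trans hst.le ht₀I.2⟩, hcon2⟩
      have := hp₀min this
      simp only [IsMinOn, IsMinFilter] at this
      exact absurd hst (not_lt.2 this)
    -- at time t₀ everything is ≤ 0
    have hattop : ∀ y, h t₀ y ≤ 0 := by
      intro y
      have hcy : ContinuousAt (fun s => h s y) t₀ := by
        have hzc : ContinuousAt (fun s => z s y) t₀ := by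
          have := hcont.continuousWithinAt (x := (t₀, y)) ⟨le_of_lt ht₀pos, trivial⟩
          have h2 : ContinuousWithinAt (fun p : ℝ × Euc N => z p.1 p.2) (Ici 0 ×ˢ univ) (t₀, y) := this
          have h3 : (Ici (0:ℝ) ×ˢ (univ : Set (Euc N))) ∈ 𝓝 ((t₀, y) : ℝ × Euc N) := by
            apply prod_mem_nhds (Ici_mem_nhds ht₀pos) univ_mem
          have h4 : ContinuousAt (fun p : ℝ × Euc N => z p.1 p.2) (t₀, y) :=
            h2.continuousAt h3
          have h5 : Continuous (fun s : ℝ => ((s, y) : ℝ × Euc N)) := by fun_prop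
          have h6 : ContinuousAt ((fun p : ℝ × Euc N => z p.1 p.2) ∘ (fun s : ℝ => (s, y))) t₀ :=
            ContinuousAt.comp (x := t₀) h4 (h5.continuousAt)
          exact h6
        apply ContinuousAt.sub
        · exact hzc.mul (Real.continuous_exp.continuousAt.comp (by fun_prop))
        · fun_prop
      have hev : ∀ᶠ s in 𝓝[<] t₀, h s y < 0 := by
        have h1 : ∀ᶠ s in 𝓝[<] t₀, 0 < s :=
          eventually_nhdsWithin_of_eventually_nhds (eventually_gt_nhds ht₀pos)
        filter_upwards [h1, self_mem_nhdsWithin] with s hs0 hst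
        exact hbefore s hs0.le hst y
      have hlim : Tendsto (fun s => h s y) (𝓝[<] t₀) (𝓝 (h t₀ y)) :=
        hcy.continuousWithinAt.tendsto
      exact le_of_tendsto hlim (hev.mono (fun s hs => hs.le))
    have hh₀eq : h t₀ x₀ = 0 := le_antisymm (hattop x₀) hh₀
    -- notation
    set E : ℝ := Real.exp (-(K * t₀)) with hE
    have hE0 : 0 < E := Real.exp_pos _
    set Z : ℝ := z t₀ x₀ with hZ
    have hCin : (0:ℝ) ≤ (inner ℝ x₀ x₀ : ℝ) := real_inner_self_nonneg
    have hsN : (0:ℝ) ≤ (N:ℝ) := Nat.cast_nonneg N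
    have hh₀eq' : Z * E = δ * ((1 + (2 * d * N + 1) * t₀) + (inner ℝ x₀ x₀ : ℝ)) := by
      have := hh₀eq
      simp only [hh] at this
      rw [hE, hZ]
      linarith
    have hZpos : 0 < Z := by
      have hC : 0 < δ * ((1 + (2 * d * N + 1) * t₀) + (inner ℝ x₀ x₀ : ℝ)) := by
        have : (0:ℝ) ≤ (2 * d * N + 1) * t₀ := by
          apply mul_nonneg _ ht₀I.1
          nlinarith
        nlinarith
      nlinarith [hE0]
    -- spatial maximum: Laplacian bound
    have hf1 : ContDiff ℝ 2 (fun y : Euc N => z t₀ y * E) :=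
      (hdx t₀ ht₀pos).mul contDiff_const
    have hf2 : ContDiff ℝ 2 (fun y : Euc N => (inner ℝ y y : ℝ)) :=
      ContDiff.inner ℝ contDiff_id contDiff_id
    have hf2' : ContDiff ℝ 2 (fun y : Euc N => δ * ((1 + (2 * d * N + 1) * t₀) + (inner ℝ y y : ℝ))) :=
      contDiff_const.mul (contDiff_const.add hf2)
    have hlapf : lap (fun y => h t₀ y) x₀ = lap (z t₀) x₀ * E - δ * (2 * N) := by
      have e1 : (fun y => h t₀ y) = fun y =>
          (fun y : Euc N => z t₀ y * E) y -
            (fun y : Euc N => δ * ((1 + (2 * d * N + 1) * t₀) + (inner ℝ y y : ℝ))) y := by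
        funext y
        simp only [hh, hE]
      rw [e1, lap_sub hf1 hf2', lap_mul_const (hdx t₀ ht₀pos) E,
        lap_const_mul δ (contDiff_const.add hf2) x₀,
        lap_const_add _ hf2 x₀, lap_inner_self x₀]
    have hlapmax : lap (fun y => h t₀ y) x₀ ≤ 0 := by
      apply lap_nonpos_of_max
      · have : (fun y => h t₀ y) = fun y =>
            (fun y : Euc N => z t₀ y * E) y -
              (fun y : Euc N => δ * ((1 + (2 * d * N + 1) * t₀) + (inner ℝ y y : ℝ))) y := by
          funext y; simp only [hh, hE]
        rw [this]
        exact hf1.sub hf2'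
      · intro y
        rw [hh₀eq]
        exact hattop y
    have hlapZ : lap (z t₀) x₀ * E ≤ δ * (2 * N) := by
      rw [hlapf] at hlapmax; linarith
    -- time derivative at the touching point
    set z' : ℝ := deriv (fun τ => z τ x₀) t₀ with hz'def
    have hz' : HasDerivAt (fun τ => z τ x₀) z' t₀ := (hdt t₀ ht₀pos x₀).hasDerivAt
    have hEd : HasDerivAt (fun s : ℝ => Real.exp (-(K * s))) (Real.exp (-(K * t₀)) * (-(K * 1))) t₀ :=
      (((hasDerivAt_id t₀).const_mul K).neg).exp
    have hg1 : HasDerivAt (fun s => z s x₀ * Real.exp (-(K * s)))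
        (z' * Real.exp (-(K * t₀)) + z t₀ x₀ * (Real.exp (-(K * t₀)) * (-(K * 1)))) t₀ :=
      hz'.mul hEd
    have hg2 : HasDerivAt (fun s : ℝ => δ * ((1 + (2 * d * N + 1) * s) + (inner ℝ x₀ x₀ : ℝ)))
        (δ * ((2 * d * N + 1) * 1 + 0)) t₀ := by
      have b1 : HasDerivAt (fun s : ℝ => (2 * d * N + 1) * s) ((2 * d * N + 1) * 1) t₀ :=
        (hasDerivAt_id t₀).const_mul _
      have b2 := (b1.const_add 1)
      have b3 := (b2.add_const ((inner ℝ x₀ x₀ : ℝ)))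
      have b4 := b3.const_mul δ
      simpa using b4
    have hg : HasDerivAt (fun s => h s x₀)
        ((z' * Real.exp (-(K * t₀)) + z t₀ x₀ * (Real.exp (-(K * t₀)) * (-(K * 1))))
          - δ * ((2 * d * N + 1) * 1 + 0)) t₀ := by
      simp only [hh]
      exact hg1.sub hg2
    -- the derivative is nonnegative
    have hgpos : 0 ≤ (z' * Real.exp (-(K * t₀)) + z t₀ x₀ * (Real.exp (-(K * t₀)) * (-(K * 1))))
          - δ * ((2 * d * N + 1) * 1 + 0) := by
      have hslope := hasDerivAt_iff_tendsto_slope.1 hg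
      have hslope' := hslope.mono_left
        (nhdsWithin_mono t₀ (fun s (hs : s ∈ Iio t₀) => ne_of_lt hs))
      apply ge_of_tendsto hslope'
      have h1 : ∀ᶠ s in 𝓝[<] t₀, 0 < s :=
        eventually_nhdsWithin_of_eventually_nhds (eventually_gt_nhds ht₀pos)
      filter_upwards [h1, self_mem_nhdsWithin] with s hs0 hst
      have hneg : h s x₀ < 0 := hbefore s hs0.le hst x₀
      have : slope (fun s => h s x₀) t₀ s = (h s x₀ - h t₀ x₀) / (s - t₀) := by
        rw [slope_def_field]
      rw [this, hh₀eq]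
      apply le_of_lt
      apply div_pos_of_neg_of_neg
      · linarith
      · exact sub_neg.2 hst
    -- the PDE inequality at the touching point
    have hPDE : z' ≤ d * lap (z t₀) x₀ + K * Z := hineq t₀ ht₀pos x₀ hZpos
    -- contradiction
    have f1 : (z' - K * Z) * E ≤ d * lap (z t₀) x₀ * E := by
      apply mul_le_mul_of_nonneg_right _ hE0.le
      linarith
    have f2 : d * (lap (z t₀) x₀ * E) ≤ d * (δ * (2 * N)) :=
      mul_le_mul_of_nonneg_left hlapZ hd.le
    have hdN : (0:ℝ) < δ := hδ
    nlinarith [hgpos, f1, f2]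
  -- conclude from main
  have hfin : z t x * Real.exp (-(K * t)) ≤ 0 := by
    by_contra hpos
    push_neg at hpos
    set P : ℝ := z t x * Real.exp (-(K * t)) with hP
    set C : ℝ := (1 + (2 * d * N + 1) * t) + (inner ℝ x x : ℝ) with hC
    have hC0 : 0 < C := by
      have h1 : (0:ℝ) ≤ (2 * d * N + 1) * t := by
        apply mul_nonneg _ ht
        have : (0:ℝ) ≤ (N:ℝ) := Nat.cast_nonneg N
        nlinarith
      have h2 : (0:ℝ) ≤ (inner ℝ x x : ℝ) := real_inner_self_nonneg
      rw [hC]; nlinarith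
    have := main (P / C) (div_pos hpos hC0)
    rw [div_mul_eq_mul_div, mul_div_assoc] at this
    rw [div_self (ne_of_gt hC0)] at this
    simp at this
  have hE0 : 0 < Real.exp (-(K * t)) := Real.exp_pos _
  nlinarith [hfin, hE0]

lemma lap_const_sub (c : ℝ) {f : Euc N → ℝ} (hf : ContDiff ℝ 2 f) (x : Euc N) :
    lap (fun y => c - f y) x = - lap f x := by
  unfold lap
  rw [← Finset.sum_neg_distrib]
  apply Finset.sum_congr rfl
  intro i _
  set w : Euc N := EuclideanSpace.single i (1:ℝ)
  have h1 : (fun y => fderiv ℝ (fun z => c - f z) y w)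
      = fun y => -fderiv ℝ f y w := by
    funext y
    have h2 : HasFDerivAt (fun z => c - f z) (-(fderiv ℝ f y)) y :=
      ((hf.differentiable (by norm_num) y).hasFDerivAt).const_sub c
    rw [h2.fderiv]
    rfl
  rw [h1, fderiv_fun_neg]
  rfl

lemma expw_hasDerivAt_t {e : Euc N} (c1 α lam : ℝ) (x : Euc N) (t : ℝ) :
    HasDerivAt (fun τ : ℝ => c1 * Real.exp (α * τ - lam * (inner ℝ e x : ℝ)))
      (α * (c1 * Real.exp (α * t - lam * (inner ℝ e x : ℝ)))) t := by
  have h1 : HasDerivAt (fun τ : ℝ => α * τ - lam * (inner ℝ e x : ℝ)) α t := by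
    simpa using ((hasDerivAt_id t).const_mul α).sub_const (lam * (inner ℝ e x : ℝ))
  have h2 := h1.exp
  have h3 := h2.const_mul c1
  have hα : α * (c1 * Real.exp (α * t - lam * (inner ℝ e x : ℝ)))
      = c1 * (Real.exp (α * t - lam * (inner ℝ e x : ℝ)) * α) := by
    ring
  rw [hα]
  exact h3

lemma expw_joint_continuous {e : Euc N} (c1 α lam : ℝ) :
    Continuous (fun p : ℝ × Euc N => c1 * Real.exp (α * p.1 - lam * (inner ℝ e p.2 : ℝ))) := by
  apply continuous_const.mul
  apply Real.continuous_exp.comp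
  exact (continuous_const.mul continuous_fst).sub
    (continuous_const.mul (Continuous.inner continuous_const continuous_snd))


set_option maxHeartbeats 2000000

/-- if `d₁ = d₂` and `a₁a₂ ≤ 1`, then for every `c > 2√(d₁r₁(1−a₁))`,
`sup_{|x| ≥ ct} (u(t,x) + |1 − v(t,x)|) → 0` as `t → +∞`. -/
theorem spreading_upper_bound_uv {N : ℕ} (hN : 2 ≤ N) (d₁ d₂ r₁ r₂ a₁ a₂ : ℝ)
    (hp : LVParams d₁ d₂ r₁ r₂ a₁ a₂) (hd : d₁ = d₂) (ha : a₁ * a₂ ≤ 1)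
    (u v : ℝ → Euc N → ℝ) (hsol : IsLVSolution d₁ d₂ r₁ r₂ a₁ a₂ u v)
    (hrange : ∀ t : ℝ, 0 ≤ t → ∀ x : Euc N, u t x ∈ Icc (0:ℝ) 1 ∧ v t x ∈ Icc (0:ℝ) 1)
    (u₀ v₀ : Euc N → ℝ) (hinit : AdmissibleInit u₀ v₀)
    (hu0 : ∀ x, u 0 x = u₀ x) (hv0 : ∀ x, v 0 x = v₀ x) :
    ∀ c : ℝ, 2 * Real.sqrt (d₁ * r₁ * (1 - a₁)) < c →
      ∀ ε > (0:ℝ), ∃ T : ℝ, ∀ t : ℝ, T ≤ t → ∀ x : Euc N, c * t ≤ ‖x‖ →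
        u t x + |1 - v t x| ≤ ε := by
  obtain ⟨hd1, hd2, hr1, hr2, ha1, ha1lt, ha2⟩ := hp
  obtain ⟨hu₀c, hv₀c, hrange0, hune, K, hKc, hKout⟩ := hinit
  intro c hc
  -- basic positivity setup
  set r : ℝ := r₁ * (1 - a₁) with hrdef
  have hr : 0 < r := mul_pos hr1 (by linarith)
  have hdr : 0 < d₁ * r := mul_pos hd1 hr
  have hsq : 2 * Real.sqrt (d₁ * r) < c := by
    have he : d₁ * r₁ * (1 - a₁) = d₁ * r := by rw [hrdef]; ring
    rwa [he] at hc
  have hc0 : 0 < c := lt_of_le_of_lt (by positivity) hsq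
  set lam : ℝ := Real.sqrt (r / d₁) with hlamdef
  have hlam : 0 < lam := Real.sqrt_pos.2 (div_pos hr hd1)
  have hlam2 : d₁ * lam ^ 2 = r := by
    rw [hlamdef, Real.sq_sqrt (le_of_lt (div_pos hr hd1))]
    field_simp
  set δ0 : ℝ := lam * (c - 2 * Real.sqrt (d₁ * r)) / 2 with hδ0def
  have hδ0 : 0 < δ0 := by
    apply div_pos (mul_pos hlam (by linarith)) two_pos
  have hlamsq : lam * Real.sqrt (d₁ * r) = r := by
    rw [hlamdef, ← Real.sqrt_mul (le_of_lt (div_pos hr hd1))]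
    rw [show r / d₁ * (d₁ * r) = r ^ 2 by field_simp]
    exact Real.sqrt_sq hr.le
  have hlc : lam * c = 2 * r + 2 * δ0 := by
    have h2 : 2 * δ0 = lam * c - 2 * (lam * Real.sqrt (d₁ * r)) := by
      rw [hδ0def]; ring
    rw [hlamsq] at h2
    linarith
  set μ : ℝ := d₁ * lam ^ 2 + r + δ0 with hμdef
  have hμ : μ = 2 * r + δ0 := by rw [hμdef, hlam2]; ring
  have hμr : r ≤ μ := by rw [hμ]; linarith
  -- radius of the compact support
  obtain ⟨RK0, hRK0⟩ := hKc.isBounded.subset_closedBall (0 : Euc N)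
  set RK : ℝ := max RK0 0 with hRKdef
  have hRKnn : 0 ≤ RK := le_max_right _ _
  have hRK : K ⊆ Metric.closedBall 0 RK :=
    subset_trans hRK0 (Metric.closedBall_subset_closedBall (le_max_left _ _))
  -- constants for the supersolutions
  set C₀ : ℝ := Real.exp (lam * RK) with hC₀def
  have hC₀ : 0 < C₀ := Real.exp_pos _
  set A' : ℝ := Real.exp (lam * RK) * (1 + r₁ * a₁ / δ0) with hA'def
  have hA'pos : 0 < A' := by
    apply mul_pos (Real.exp_pos _)
    have : 0 ≤ r₁ * a₁ / δ0 := by positivity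
    linarith
  have hA'C : r₁ * a₁ * C₀ ≤ δ0 * A' := by
    have he : δ0 * A' = δ0 * C₀ + r₁ * a₁ * C₀ := by
      rw [hA'def, hC₀def]; field_simp
    nlinarith [mul_pos hδ0 hC₀]
  -- the two supersolutions, for each direction e
  set Qf : Euc N → ℝ → Euc N → ℝ :=
    fun e t x => C₀ * Real.exp (r * t - lam * (inner ℝ e x : ℝ)) with hQfdef
  set Uf : Euc N → ℝ → Euc N → ℝ :=
    fun e t x => A' * Real.exp (μ * t - lam * (inner ℝ e x : ℝ)) with hUfdef
  have hQfpos : ∀ e t x, 0 < Qf e t x := fun e t x => mul_pos hC₀ (Real.exp_pos _)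
  have hUfpos : ∀ e t x, 0 < Uf e t x := fun e t x => mul_pos hA'pos (Real.exp_pos _)
  -- initial lower bound for the supersolutions on K
  have hinitK : ∀ e : Euc N, ‖e‖ = 1 → ∀ y ∈ K, (1:ℝ) ≤ C₀ * Real.exp (-(lam * (inner ℝ e y : ℝ))) := by
    intro e he y hy
    have h1 : (inner ℝ e y : ℝ) ≤ RK := by
      have h2 := real_inner_le_norm e y
      have h3 : ‖y‖ ≤ RK := by
        have := hRK hy
        simpa [Metric.mem_closedBall, dist_eq_norm] using this
      rw [he] at h2
      nlinarith
    rw [hC₀def, ← Real.exp_add]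
    have h4 : 0 ≤ lam * RK + -(lam * (inner ℝ e y : ℝ)) := by
      nlinarith [mul_le_mul_of_nonneg_left h1 hlam.le]
    calc (1:ℝ) = Real.exp 0 := Real.exp_zero.symm
      _ ≤ _ := Real.exp_le_exp.2 h4
  -- range facts
  have hU01 : ∀ t, 0 ≤ t → ∀ x, 0 ≤ u t x ∧ u t x ≤ 1 ∧ 0 ≤ v t x ∧ v t x ≤ 1 := by
    intro t ht x
    obtain ⟨h1, h2⟩ := hrange t ht x
    exact ⟨h1.1, h1.2, h2.1, h2.2⟩
  -- STEP 1: comparison for q = 1 - v - a₂ u against Qf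
  have hqQ : ∀ e : Euc N, ‖e‖ = 1 → ∀ t, 0 ≤ t → ∀ x,
      1 - v t x - a₂ * u t x ≤ Qf e t x := by
    intro e he
    have hQcont : Continuous (fun p : ℝ × Euc N => Qf e p.1 p.2) := by
      rw [hQfdef]
      exact expw_joint_continuous C₀ r lam
    have hcont : ContinuousOn (fun p : ℝ × Euc N =>
        1 - v p.1 p.2 - a₂ * u p.1 p.2 - Qf e p.1 p.2) (Ici 0 ×ˢ univ) :=
      ((continuousOn_const.sub hsol.contv).sub
        (continuousOn_const.mul hsol.contu)).sub hQcont.continuousOn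
    have hbdd : ∀ t, 0 ≤ t → ∀ x, 1 - v t x - a₂ * u t x - Qf e t x ≤ 1 := by
      intro t ht x
      obtain ⟨h1, h2, h3, h4⟩ := hU01 t ht x
      have h5 := hQfpos e t x
      have m1 : 0 ≤ a₂ * u t x := mul_nonneg (by linarith) h1
      linarith only [m1, h3, h5]
    have hz0 : ∀ x, 1 - v 0 x - a₂ * u 0 x - Qf e 0 x ≤ 0 := by
      intro x
      rw [hu0, hv0]
      by_cases hx : x ∈ K
      · have h1 := hinitK e he x hx
        have h2 : Qf e 0 x = C₀ * Real.exp (-(lam * (inner ℝ e x : ℝ))) := by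
          rw [hQfdef]
          norm_num
        rw [h2]
        obtain ⟨hu1, hv1⟩ := hrange0 x
        have m1 : 0 ≤ a₂ * u₀ x := mul_nonneg (by linarith) hu1.1
        linarith only [m1, hv1.1, h1]
      · obtain ⟨h1, h2⟩ := hKout x hx
        rw [h1, h2]
        have h3 := hQfpos e 0 x
        have m1 : a₂ * (0:ℝ) = 0 := mul_zero _
        linarith only [h3, m1]
    have hdt : ∀ t, 0 < t → ∀ x, DifferentiableAt ℝ
        (fun τ => 1 - v τ x - a₂ * u τ x - Qf e τ x) t := by
      intro t ht x
      have hvdt : DifferentiableAt ℝ (fun τ => v τ x) t :=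
        (((hsol.smooth_t x).2.contDiffAt (Ioi_mem_nhds ht)).differentiableAt one_ne_zero)
      have hudt : DifferentiableAt ℝ (fun τ => u τ x) t :=
        (((hsol.smooth_t x).1.contDiffAt (Ioi_mem_nhds ht)).differentiableAt one_ne_zero)
      have hQdt : DifferentiableAt ℝ (fun τ => Qf e τ x) t := by
        rw [hQfdef]
        exact (expw_hasDerivAt_t C₀ r lam x t).differentiableAt
      exact (((differentiableAt_const (1:ℝ)).sub hvdt).sub (hudt.const_mul a₂)).sub hQdt
    have hdx : ∀ t, 0 < t → ContDiff ℝ 2 (fun x => 1 - v t x - a₂ * u t x - Qf e t x) := by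
      intro t ht
      have h1 := (hsol.smooth_x t ht).1
      have h2 := (hsol.smooth_x t ht).2
      have h3 : ContDiff ℝ 2 (fun x => Qf e t x) := by
        rw [hQfdef]
        exact expw_contDiff C₀ lam (r * t)
      exact ((contDiff_const.sub h2).sub (contDiff_const.mul h1)).sub h3
    have hineq : ∀ t, 0 < t → ∀ x, 0 < 1 - v t x - a₂ * u t x - Qf e t x →
        deriv (fun τ => 1 - v τ x - a₂ * u τ x - Qf e τ x) t ≤
          d₁ * lap (fun y => 1 - v t y - a₂ * u t y - Qf e t y) x
            + 0 * (1 - v t x - a₂ * u t x - Qf e t x) := by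
      intro t ht x hpos
      -- time derivative
      have hvdt : DifferentiableAt ℝ (fun τ => v τ x) t :=
        (((hsol.smooth_t x).2.contDiffAt (Ioi_mem_nhds ht)).differentiableAt one_ne_zero)
      have hudt : DifferentiableAt ℝ (fun τ => u τ x) t :=
        (((hsol.smooth_t x).1.contDiffAt (Ioi_mem_nhds ht)).differentiableAt one_ne_zero)
      have hQ' : HasDerivAt (fun τ => Qf e τ x) (r * Qf e t x) t := by
        rw [hQfdef]
        exact expw_hasDerivAt_t C₀ r lam x t
      have hder : HasDerivAt (fun τ => 1 - v τ x - a₂ * u τ x - Qf e τ x)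
          ((0 - deriv (fun τ => v τ x) t) - a₂ * deriv (fun τ => u τ x) t
            - r * Qf e t x) t :=
        (((hasDerivAt_const t (1:ℝ)).sub hvdt.hasDerivAt).sub
          (hudt.hasDerivAt.const_mul a₂)).sub hQ'
      rw [hder.deriv]
      -- Laplacian
      have h1 := (hsol.smooth_x t ht).1
      have h2 := (hsol.smooth_x t ht).2
      have hlapQ : lap (fun y => Qf e t y) x = lam ^ 2 * Qf e t x := by
        rw [hQfdef]
        exact expw_lap C₀ lam he (r * t) x
      have hlapz : lap (fun y => 1 - v t y - a₂ * u t y - Qf e t y) x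
          = (- lap (v t) x - a₂ * lap (u t) x) - lam ^ 2 * Qf e t x := by
        have e1 : (fun y => 1 - v t y - a₂ * u t y - Qf e t y)
            = fun y => (fun y => 1 - v t y - a₂ * u t y) y - (fun y => Qf e t y) y := rfl
        rw [e1, lap_sub ((contDiff_const.sub h2).sub (contDiff_const.mul h1))
          (by rw [hQfdef]; exact expw_contDiff C₀ lam (r * t)), hlapQ]
        have e2 : (fun y => 1 - v t y - a₂ * u t y)
            = fun y => (fun y => 1 - v t y) y - (fun y => a₂ * u t y) y := rfl
        rw [e2, lap_sub (contDiff_const.sub h2) (contDiff_const.mul h1),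
          lap_const_sub 1 h2, lap_const_mul a₂ h1]
      rw [hlapz]
      -- the PDE
      have heu := hsol.eqn_u t ht x
      have hev := hsol.eqn_v t ht x
      rw [← hd] at hev
      rw [heu, hev]
      -- algebra
      obtain ⟨hu1, hu2, hv1, hv2⟩ := hU01 t ht.le x
      have hQp := hQfpos e t x
      have hqpos : 0 < 1 - v t x - a₂ * u t x := by linarith only [hpos, hQp]
      have t1 : 0 ≤ r₂ * v t x * (1 - v t x - a₂ * u t x) := by
        apply mul_nonneg (mul_nonneg hr2.le hv1) hqpos.le
      have hbr : 0 ≤ 1 - u t x - a₁ * v t x := by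
        have hid : 1 - u t x - a₁ * v t x
            = (1 - a₁) + (a₁ * a₂ - 1) * u t x + a₁ * (1 - v t x - a₂ * u t x) := by ring
        have m2 : (a₁ * a₂ - 1) * 1 ≤ (a₁ * a₂ - 1) * u t x :=
          mul_le_mul_of_nonpos_left hu2 (by linarith)
        have m3 : 0 ≤ a₁ * (1 - v t x - a₂ * u t x) := mul_nonneg ha1.le hqpos.le
        have m4 : a₁ * 1 ≤ a₁ * a₂ := mul_le_mul_of_nonneg_left ha2.le ha1.le
        linarith only [hid, m2, m3, m4, ha1lt]
      have t2 : 0 ≤ r₁ * u t x * (1 - u t x - a₁ * v t x) := by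
        apply mul_nonneg (mul_nonneg hr1.le hu1) hbr
      have t3 : 0 ≤ a₂ * (r₁ * u t x * (1 - u t x - a₁ * v t x)) :=
        mul_nonneg (by linarith) t2
      have hcancel : d₁ * ((- lap (v t) x - a₂ * lap (u t) x) - lam ^ 2 * Qf e t x)
          = -(d₁ * lap (v t) x) - a₂ * (d₁ * lap (u t) x) - r * Qf e t x := by
        rw [← hlam2]; ring
      rw [hcancel]
      linarith only [t1, t3]
    intro t ht x
    have := parabolic_comparison (N := N) d₁ 0 1 hd1 le_rfl
      (fun s y => 1 - v s y - a₂ * u s y - Qf e s y)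
      hcont hbdd hz0 hdt hdx hineq ht x
    linarith only [this]
  -- STEP 2: comparison for u against Uf
  have huU : ∀ e : Euc N, ‖e‖ = 1 → ∀ t, 0 ≤ t → ∀ x, u t x ≤ Uf e t x := by
    intro e he
    have hUcont : Continuous (fun p : ℝ × Euc N => Uf e p.1 p.2) := by
      rw [hUfdef]
      exact expw_joint_continuous A' μ lam
    have hcont : ContinuousOn (fun p : ℝ × Euc N =>
        u p.1 p.2 - Uf e p.1 p.2) (Ici 0 ×ˢ univ) :=
      hsol.contu.sub hUcont.continuousOn
    have hbdd : ∀ t, 0 ≤ t → ∀ x, u t x - Uf e t x ≤ 1 := by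
      intro t ht x
      obtain ⟨h1, h2, h3, h4⟩ := hU01 t ht x
      linarith only [h2, hUfpos e t x]
    have hz0 : ∀ x, u 0 x - Uf e 0 x ≤ 0 := by
      intro x
      rw [hu0]
      by_cases hx : x ∈ K
      · have h1 := hinitK e he x hx
        have hp1 : C₀ ≤ A' := by
          rw [hA'def, hC₀def]
          have q1 : 0 ≤ r₁ * a₁ / δ0 := div_nonneg (mul_nonneg hr1.le ha1.le) hδ0.le
          have q2 : Real.exp (lam * RK) * (1 + r₁ * a₁ / δ0)
              = Real.exp (lam * RK) + Real.exp (lam * RK) * (r₁ * a₁ / δ0) := by ring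
          linarith only [q2, mul_nonneg (Real.exp_pos (lam * RK)).le q1]
        have h2 : Uf e 0 x = A' * Real.exp (-(lam * (inner ℝ e x : ℝ))) := by
          rw [hUfdef]
          norm_num
        rw [h2]
        have h3 : C₀ * Real.exp (-(lam * (inner ℝ e x : ℝ)))
            ≤ A' * Real.exp (-(lam * (inner ℝ e x : ℝ))) :=
          mul_le_mul_of_nonneg_right hp1 (Real.exp_pos _).le
        obtain ⟨hu1, hv1⟩ := hrange0 x
        linarith only [h1, h3, hu1.2]
      · obtain ⟨h1, h2⟩ := hKout x hx
        rw [h1]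
        linarith only [hUfpos e 0 x]
    have hdt : ∀ t, 0 < t → ∀ x, DifferentiableAt ℝ
        (fun τ => u τ x - Uf e τ x) t := by
      intro t ht x
      have hudt : DifferentiableAt ℝ (fun τ => u τ x) t :=
        (((hsol.smooth_t x).1.contDiffAt (Ioi_mem_nhds ht)).differentiableAt one_ne_zero)
      have hUdt : DifferentiableAt ℝ (fun τ => Uf e τ x) t := by
        rw [hUfdef]
        exact (expw_hasDerivAt_t A' μ lam x t).differentiableAt
      exact hudt.sub hUdt
    have hdx : ∀ t, 0 < t → ContDiff ℝ 2 (fun x => u t x - Uf e t x) := by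
      intro t ht
      have h1 := (hsol.smooth_x t ht).1
      have h3 : ContDiff ℝ 2 (fun x => Uf e t x) := by
        rw [hUfdef]
        exact expw_contDiff A' lam (μ * t)
      exact h1.sub h3
    have hineq : ∀ t, 0 < t → ∀ x, 0 < u t x - Uf e t x →
        deriv (fun τ => u τ x - Uf e τ x) t ≤
          d₁ * lap (fun y => u t y - Uf e t y) x + r * (u t x - Uf e t x) := by
      intro t ht x hpos
      have hudt : DifferentiableAt ℝ (fun τ => u τ x) t :=
        (((hsol.smooth_t x).1.contDiffAt (Ioi_mem_nhds ht)).differentiableAt one_ne_zero)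
      have hU' : HasDerivAt (fun τ => Uf e τ x) (μ * Uf e t x) t := by
        rw [hUfdef]
        exact expw_hasDerivAt_t A' μ lam x t
      have hder : HasDerivAt (fun τ => u τ x - Uf e τ x)
          (deriv (fun τ => u τ x) t - μ * Uf e t x) t :=
        hudt.hasDerivAt.sub hU'
      rw [hder.deriv]
      have h1 := (hsol.smooth_x t ht).1
      have hlapU : lap (fun y => Uf e t y) x = lam ^ 2 * Uf e t x := by
        rw [hUfdef]
        exact expw_lap A' lam he (μ * t) x
      have hlapz : lap (fun y => u t y - Uf e t y) x
          = lap (u t) x - lam ^ 2 * Uf e t x := by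
        have e1 : (fun y => u t y - Uf e t y)
            = fun y => (u t) y - (fun y => Uf e t y) y := rfl
        rw [e1, lap_sub h1 (by rw [hUfdef]; exact expw_contDiff A' lam (μ * t)), hlapU]
      rw [hlapz, hsol.eqn_u t ht x]
      -- the key nonlinear estimate
      obtain ⟨hu1, hu2, hv1, hv2⟩ := hU01 t ht.le x
      have hqQe := hqQ e he t ht.le x
      have hidu : r₁ * u t x * (1 - u t x - a₁ * v t x)
          = r * u t x + r₁ * (a₁ * a₂ - 1) * (u t x) ^ 2
            + r₁ * a₁ * (u t x * (1 - v t x - a₂ * u t x)) := by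
        rw [hrdef]; ring
      have m5 : r₁ * (a₁ * a₂ - 1) * (u t x) ^ 2 ≤ 0 := by
        apply mul_nonpos_of_nonpos_of_nonneg _ (sq_nonneg _)
        apply mul_nonpos_of_nonneg_of_nonpos hr1.le
        linarith
      have m6 : u t x * (1 - v t x - a₂ * u t x) ≤ Qf e t x := by
        rcases le_or_gt (1 - v t x - a₂ * u t x) 0 with hq0 | hq0
        · have h7 : u t x * (1 - v t x - a₂ * u t x) ≤ 0 :=
            mul_nonpos_of_nonneg_of_nonpos hu1 hq0
          linarith only [h7, hQfpos e t x]
        · have h7 : u t x * (1 - v t x - a₂ * u t x) ≤ 1 * (1 - v t x - a₂ * u t x) :=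
            mul_le_mul_of_nonneg_right hu2 hq0.le
          have h8 : (1:ℝ) * (1 - v t x - a₂ * u t x) = 1 - v t x - a₂ * u t x := one_mul _
          linarith only [h7, h8, hqQe]
      have m7 : r₁ * a₁ * (u t x * (1 - v t x - a₂ * u t x)) ≤ r₁ * a₁ * Qf e t x :=
        mul_le_mul_of_nonneg_left m6 (mul_nonneg hr1.le ha1.le)
      have m8 : r₁ * a₁ * Qf e t x ≤ δ0 * Uf e t x := by
        have hm : Real.exp (r * t - lam * (inner ℝ e x : ℝ))
            ≤ Real.exp (μ * t - lam * (inner ℝ e x : ℝ)) := by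
          apply Real.exp_le_exp.2
          have h9 : r * t ≤ μ * t := mul_le_mul_of_nonneg_right hμr ht.le
          linarith only [h9]
        have m8a : (r₁ * a₁ * C₀) * Real.exp (r * t - lam * (inner ℝ e x : ℝ))
            ≤ (δ0 * A') * Real.exp (μ * t - lam * (inner ℝ e x : ℝ)) :=
          mul_le_mul hA'C hm (Real.exp_pos _).le (mul_pos hδ0 hA'pos).le
        rw [hQfdef, hUfdef]
        simp only []
        have q3 : r₁ * a₁ * (C₀ * Real.exp (r * t - lam * (inner ℝ e x : ℝ)))
            = (r₁ * a₁ * C₀) * Real.exp (r * t - lam * (inner ℝ e x : ℝ)) := by ring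
        have q4 : δ0 * (A' * Real.exp (μ * t - lam * (inner ℝ e x : ℝ)))
            = (δ0 * A') * Real.exp (μ * t - lam * (inner ℝ e x : ℝ)) := by ring
        linarith only [m8a, q3, q4]
      have hexp : d₁ * (lap (u t) x - lam ^ 2 * Uf e t x) + r * (u t x - Uf e t x)
          = (d₁ * lap (u t) x - μ * Uf e t x) + (r * u t x + δ0 * Uf e t x) := by
        rw [hμdef]; ring
      linarith only [hidu, m5, m7, m8, hexp]
    intro t ht x
    have := parabolic_comparison (N := N) d₁ r 1 hd1 hr.le
      (fun s y => u s y - Uf e s y)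
      hcont hbdd hz0 hdt hdx hineq ht x
    linarith only [this]
  -- STEP 3: conclusion
  intro ε hε
  have hdecay : Tendsto (fun t : ℝ => (1 + a₂) * A' * Real.exp (-(δ0 * t))
      + C₀ * Real.exp (-((r + 2 * δ0) * t))) atTop (𝓝 0) := by
    have h1 : Tendsto (fun t : ℝ => Real.exp (-(δ0 * t))) atTop (𝓝 0) := by
      apply Real.tendsto_exp_atBot.comp
      exact tendsto_neg_atBot_iff.2 (Tendsto.const_mul_atTop hδ0 tendsto_id)
    have h2 : Tendsto (fun t : ℝ => Real.exp (-((r + 2 * δ0) * t))) atTop (𝓝 0) := by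
      apply Real.tendsto_exp_atBot.comp
      exact tendsto_neg_atBot_iff.2 (Tendsto.const_mul_atTop (by linarith) tendsto_id)
    have h3 := (h1.const_mul ((1 + a₂) * A')).add (h2.const_mul C₀)
    simpa using h3
  have hev : ∀ᶠ t in atTop, (1 + a₂) * A' * Real.exp (-(δ0 * t))
      + C₀ * Real.exp (-((r + 2 * δ0) * t)) < ε :=
    hdecay.eventually (eventually_lt_nhds hε)
  obtain ⟨T₀, hT₀⟩ := eventually_atTop.1 hev
  refine ⟨max T₀ 1, ?_⟩
  intro t htT x hx
  have ht0 : (0:ℝ) < t := lt_of_lt_of_le one_pos (le_trans (le_max_right _ _) htT)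
  have hxpos : 0 < ‖x‖ := lt_of_lt_of_le (mul_pos hc0 ht0) hx
  have hxne : x ≠ 0 := norm_pos_iff.1 hxpos
  set e : Euc N := ‖x‖⁻¹ • x with hedef
  have he : ‖e‖ = 1 := norm_smul_inv_norm hxne
  have hin : (inner ℝ e x : ℝ) = ‖x‖ := by
    rw [hedef, real_inner_smul_left, real_inner_self_eq_norm_sq, sq]
    field_simp
  have hlamx : (2 * r + 2 * δ0) * t ≤ lam * ‖x‖ := by
    have h1 : lam * (c * t) ≤ lam * ‖x‖ := mul_le_mul_of_nonneg_left hx hlam.le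
    have h2 : lam * (c * t) = (2 * r + 2 * δ0) * t := by rw [← mul_assoc, hlc]
    linarith only [h1, h2]
  have hQb : Qf e t x ≤ C₀ * Real.exp (-((r + 2 * δ0) * t)) := by
    rw [hQfdef]
    simp only []
    apply mul_le_mul_of_nonneg_left _ hC₀.le
    apply Real.exp_le_exp.2
    rw [hin]
    have h4 : (r + 2 * δ0) * t + r * t = (2 * r + 2 * δ0) * t := by ring
    linarith only [hlamx, h4]
  have hUb : Uf e t x ≤ A' * Real.exp (-(δ0 * t)) := by
    rw [hUfdef]
    simp only []
    apply mul_le_mul_of_nonneg_left _ hA'pos.le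
    apply Real.exp_le_exp.2
    rw [hin]
    have h4 : μ * t = 2 * (r * t) + δ0 * t := by rw [hμ]; ring
    have h5 : (2 * r + 2 * δ0) * t = 2 * (r * t) + 2 * (δ0 * t) := by ring
    linarith only [hlamx, h4, h5]
  have hq := hqQ e he t ht0.le x
  have hu := huU e he t ht0.le x
  obtain ⟨hu1, hu2, hv1, hv2⟩ := hU01 t ht0.le x
  have habs : |1 - v t x| = 1 - v t x := abs_of_nonneg (by linarith only [hv2])
  rw [habs]
  have hid2 : u t x + (1 - v t x)
      = (1 - v t x - a₂ * u t x) + (1 + a₂) * u t x := by ring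
  have s1 : (1 + a₂) * u t x ≤ (1 + a₂) * Uf e t x :=
    mul_le_mul_of_nonneg_left hu (by linarith only [ha2])
  have s2 : (1 + a₂) * Uf e t x ≤ (1 + a₂) * (A' * Real.exp (-(δ0 * t))) :=
    mul_le_mul_of_nonneg_left hUb (by linarith only [ha2])
  have s3 : (1 + a₂) * (A' * Real.exp (-(δ0 * t)))
      = (1 + a₂) * A' * Real.exp (-(δ0 * t)) := by ring
  have hfin := hT₀ t (le_trans (le_max_left _ _) htT)
  linarith only [hid2, hq, hQb, s1, s2, s3, hfin]
end
end
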